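/- Let ρ : Ω → ℝ be a smooth function on an open set Ω ⊂ ℂ², let p ∈ Ω with ρ(p) = 0 and dρ(p) ≠ 0, and let n ≥ 3. Then det D_n(ρ)(p) ≠ 0 if and only if J(ρ)(p) ≠ 0, where J(ρ) := det of the 3×3 bordered Hessian matrix [[ρ, ρ_z̄, ρ_w̄],[ρ_z, ρ_{zz̄}, ρ_{zw̄}],[ρ_w, ρ_{wz̄}, ρ_{ww̄}]] is Fefferman's Monge–Ampère operator, whose nonvanishing at p is the condition that the hypersurface {ρ = 0} is Levi-nondegenerate at p. -/

import Mathlib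

noncomputable section

open Complex Matrix Set

/-- Wirtinger derivative `∂/∂z` (first coordinate) of `f : ℂ × ℂ → ℂ`. -/
def wdz (f : ℂ × ℂ → ℂ) (p : ℂ × ℂ) : ℂ :=
  (fderiv ℝ f p (1, 0) - Complex.I * fderiv ℝ f p (Complex.I, 0)) / 2

/-- Wirtinger derivative `∂/∂z̄` (first coordinate). -/
def wdzb (f : ℂ × ℂ → ℂ) (p : ℂ × ℂ) : ℂ :=
  (fderiv ℝ f p (1, 0) + Complex.I * fderiv ℝ f p (Complex.I, 0)) / 2

/-- Wirtinger derivative `∂/∂w` (second coordinate). -/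
def wdw (f : ℂ × ℂ → ℂ) (p : ℂ × ℂ) : ℂ :=
  (fderiv ℝ f p (0, 1) - Complex.I * fderiv ℝ f p (0, Complex.I)) / 2

/-- Wirtinger derivative `∂/∂w̄` (second coordinate). -/
def wdwb (f : ℂ × ℂ → ℂ) (p : ℂ × ℂ) : ℂ :=
  (fderiv ℝ f p (0, 1) + Complex.I * fderiv ℝ f p (0, Complex.I)) / 2

/-- The operator `L := -ρ_w ∂_z + ρ_z ∂_w` associated with `ρ`. -/
def Lop (ρ f : ℂ × ℂ → ℂ) : ℂ × ℂ → ℂ :=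
  fun p => -(wdw ρ p) * wdz f p + wdz ρ p * wdw f p

/-- The operator `L̄ := -ρ_w̄ ∂_z̄ + ρ_z̄ ∂_w̄` associated with `ρ`. -/
def Lbar (ρ f : ℂ × ℂ → ℂ) : ℂ × ℂ → ℂ :=
  fun p => -(wdwb ρ p) * wdzb f p + wdzb ρ p * wdwb f p

/-- The function `ρ_{Z²}(L,L) = ρ_zz ρ_w² - 2 ρ_zw ρ_z ρ_w + ρ_ww ρ_z²`. -/
def rhoZ2LL (ρ : ℂ × ℂ → ℂ) : ℂ × ℂ → ℂ :=
  fun p => wdz (wdz ρ) p * (wdw ρ p) ^ 2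
    - 2 * wdw (wdz ρ) p * wdz ρ p * wdw ρ p
    + wdw (wdw ρ) p * (wdz ρ p) ^ 2

/-- The row functions of the matrix `A_n(ρ)`: for `i ≤ n` the monomial `ρ_z^i ρ_w^{n-i}`,
and for `i = n + 1 + s` (with `0 ≤ s ≤ n - 3`) the function `ρ_z^s ρ_w^{n-3-s} ρ_{Z²}(L,L)`. -/
def rowA (ρ : ℂ × ℂ → ℂ) (n i : ℕ) : ℂ × ℂ → ℂ :=
  if i ≤ n then fun p => (wdz ρ p) ^ i * (wdw ρ p) ^ (n - i)
  else fun p => (wdz ρ p) ^ (i - (n + 1)) * (wdw ρ p) ^ (n - 3 - (i - (n + 1))) * rhoZ2LL ρ p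

/-- The `(2n-1) × (2n-1)` matrix `A_n(ρ)` at the point `p`; the `(i,j)` entry is
`L̄^j` applied to the `i`-th row function, evaluated at `p`. -/
def matA (ρ : ℂ × ℂ → ℂ) (n : ℕ) (p : ℂ × ℂ) :
    Matrix (Fin (2 * n - 1)) (Fin (2 * n - 1)) ℂ :=
  fun i j => (Lbar ρ)^[(j : ℕ)] (rowA ρ n (i : ℕ)) p

/-- The `(n+1) × (n+1)` matrix `D_n(ρ) = (L̄^j (ρ_z^k ρ_w^{n-k}))_{0 ≤ j,k ≤ n}` at `p`. -/
def matD (ρ : ℂ × ℂ → ℂ) (n : ℕ) (p : ℂ × ℂ) : Matrix (Fin (n + 1)) (Fin (n + 1)) ℂ :=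
  fun k j => (Lbar ρ)^[(j : ℕ)] (fun q => (wdz ρ q) ^ (k : ℕ) * (wdw ρ q) ^ (n - (k : ℕ))) p

/-- The determinant of the complex Jacobian matrix of a map `H : ℂ² → ℂ²`
(computed via Wirtinger derivatives of the two components). -/
def detJac (H : ℂ × ℂ → ℂ × ℂ) (p : ℂ × ℂ) : ℂ :=
  wdz (fun q => (H q).1) p * wdw (fun q => (H q).2) p
    - wdw (fun q => (H q).1) p * wdz (fun q => (H q).2) p

/-- Fefferman's Monge–Ampère operator: the determinant of the bordered complex Hessian
`[[ρ, ρ_z̄, ρ_w̄], [ρ_z, ρ_{zz̄}, ρ_{zw̄}], [ρ_w, ρ_{wz̄}, ρ_{ww̄}]]`. -/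
def Jfeff (ρ : ℂ × ℂ → ℂ) (p : ℂ × ℂ) : ℂ :=
  Matrix.det !![ρ p, wdzb ρ p, wdwb ρ p;
    wdz ρ p, wdzb (wdz ρ) p, wdwb (wdz ρ) p;
    wdw ρ p, wdzb (wdw ρ) p, wdwb (wdw ρ) p]

namespace Wirt

lemma cda_fderiv_apply {f : ℂ × ℂ → ℂ} {q : ℂ × ℂ} (hf : ContDiffAt ℝ (⊤:ℕ∞) f q)
    (v : ℂ × ℂ) : ContDiffAt ℝ (⊤:ℕ∞) (fun x => fderiv ℝ f x v) q :=
  (hf.fderiv_right (by simp)).clm_apply contDiffAt_const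

lemma cda_wdz {f : ℂ × ℂ → ℂ} {q : ℂ × ℂ} (hf : ContDiffAt ℝ (⊤:ℕ∞) f q) :
    ContDiffAt ℝ (⊤:ℕ∞) (wdz f) q := by
  unfold wdz
  exact ((cda_fderiv_apply hf _).sub
    (contDiffAt_const.mul (cda_fderiv_apply hf _))).div_const 2

lemma cda_wdzb {f : ℂ × ℂ → ℂ} {q : ℂ × ℂ} (hf : ContDiffAt ℝ (⊤:ℕ∞) f q) :
    ContDiffAt ℝ (⊤:ℕ∞) (wdzb f) q := by
  unfold wdzb
  exact ((cda_fderiv_apply hf _).add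
    (contDiffAt_const.mul (cda_fderiv_apply hf _))).div_const 2

lemma cda_wdw {f : ℂ × ℂ → ℂ} {q : ℂ × ℂ} (hf : ContDiffAt ℝ (⊤:ℕ∞) f q) :
    ContDiffAt ℝ (⊤:ℕ∞) (wdw f) q := by
  unfold wdw
  exact ((cda_fderiv_apply hf _).sub
    (contDiffAt_const.mul (cda_fderiv_apply hf _))).div_const 2

lemma cda_wdwb {f : ℂ × ℂ → ℂ} {q : ℂ × ℂ} (hf : ContDiffAt ℝ (⊤:ℕ∞) f q) :
    ContDiffAt ℝ (⊤:ℕ∞) (wdwb f) q := by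
  unfold wdwb
  exact ((cda_fderiv_apply hf _).add
    (contDiffAt_const.mul (cda_fderiv_apply hf _))).div_const 2

lemma cda_lbar {ρ f : ℂ × ℂ → ℂ} {q : ℂ × ℂ} (hρ : ContDiffAt ℝ (⊤:ℕ∞) ρ q)
    (hf : ContDiffAt ℝ (⊤:ℕ∞) f q) : ContDiffAt ℝ (⊤:ℕ∞) (Lbar ρ f) q := by
  unfold Lbar
  exact (((cda_wdwb hρ).neg.mul (cda_wdzb hf)).add ((cda_wdzb hρ).mul (cda_wdwb hf)))

-- product rules
lemma fderiv_apply_mul {f g : ℂ × ℂ → ℂ} {q : ℂ × ℂ} (hf : DifferentiableAt ℝ f q)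
    (hg : DifferentiableAt ℝ g q) (v : ℂ × ℂ) :
    fderiv ℝ (fun x => f x * g x) q v = f q * fderiv ℝ g q v + g q * fderiv ℝ f q v := by
  rw [fderiv_fun_mul hf hg]; simp [smul_eq_mul]

lemma wdzb_mul {f g : ℂ × ℂ → ℂ} {q : ℂ × ℂ} (hf : DifferentiableAt ℝ f q)
    (hg : DifferentiableAt ℝ g q) :
    wdzb (fun x => f x * g x) q = f q * wdzb g q + g q * wdzb f q := by
  simp only [wdzb, fderiv_apply_mul hf hg]; ring

lemma wdwb_mul {f g : ℂ × ℂ → ℂ} {q : ℂ × ℂ} (hf : DifferentiableAt ℝ f q)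
    (hg : DifferentiableAt ℝ g q) :
    wdwb (fun x => f x * g x) q = f q * wdwb g q + g q * wdwb f q := by
  simp only [wdwb, fderiv_apply_mul hf hg]; ring

lemma lbar_mul {ρ f g : ℂ × ℂ → ℂ} {q : ℂ × ℂ} (hf : DifferentiableAt ℝ f q)
    (hg : DifferentiableAt ℝ g q) :
    Lbar ρ (fun x => f x * g x) q = f q * Lbar ρ g q + g q * Lbar ρ f q := by
  simp only [Lbar, wdzb_mul hf hg, wdwb_mul hf hg]; ring

-- additivity
lemma wdzb_add {f g : ℂ × ℂ → ℂ} {q : ℂ × ℂ} (hf : DifferentiableAt ℝ f q)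
    (hg : DifferentiableAt ℝ g q) :
    wdzb (fun x => f x + g x) q = wdzb f q + wdzb g q := by
  simp only [wdzb, fderiv_fun_add hf hg]; simp; ring

lemma wdwb_add {f g : ℂ × ℂ → ℂ} {q : ℂ × ℂ} (hf : DifferentiableAt ℝ f q)
    (hg : DifferentiableAt ℝ g q) :
    wdwb (fun x => f x + g x) q = wdwb f q + wdwb g q := by
  simp only [wdwb, fderiv_fun_add hf hg]; simp; ring

lemma lbar_add {ρ f g : ℂ × ℂ → ℂ} {q : ℂ × ℂ} (hf : DifferentiableAt ℝ f q)
    (hg : DifferentiableAt ℝ g q) :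
    Lbar ρ (fun x => f x + g x) q = Lbar ρ f q + Lbar ρ g q := by
  simp only [Lbar, wdzb_add hf hg, wdwb_add hf hg]; ring

-- constant multiple
lemma wdzb_const_mul {f : ℂ × ℂ → ℂ} {q : ℂ × ℂ} (c : ℂ) (hf : DifferentiableAt ℝ f q) :
    wdzb (fun x => c * f x) q = c * wdzb f q := by
  simp only [wdzb, fderiv_const_mul hf c]; simp; ring

lemma wdwb_const_mul {f : ℂ × ℂ → ℂ} {q : ℂ × ℂ} (c : ℂ) (hf : DifferentiableAt ℝ f q) :
    wdwb (fun x => c * f x) q = c * wdwb f q := by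
  simp only [wdwb, fderiv_const_mul hf c]; simp; ring

lemma lbar_const_mul {ρ f : ℂ × ℂ → ℂ} {q : ℂ × ℂ} (c : ℂ) (hf : DifferentiableAt ℝ f q) :
    Lbar ρ (fun x => c * f x) q = c * Lbar ρ f q := by
  simp only [Lbar, wdzb_const_mul c hf, wdwb_const_mul c hf]; ring

-- locality
lemma wdzb_congr {f g : ℂ × ℂ → ℂ} {p : ℂ × ℂ} (h : f =ᶠ[nhds p] g) :
    wdzb f =ᶠ[nhds p] wdzb g :=
  (h.fderiv (𝕜 := ℝ)).mono (fun q hq => by simp only [wdzb, hq])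

lemma wdwb_congr {f g : ℂ × ℂ → ℂ} {p : ℂ × ℂ} (h : f =ᶠ[nhds p] g) :
    wdwb f =ᶠ[nhds p] wdwb g :=
  (h.fderiv (𝕜 := ℝ)).mono (fun q hq => by simp only [wdwb, hq])

lemma lbar_congr {ρ f g : ℂ × ℂ → ℂ} {p : ℂ × ℂ} (h : f =ᶠ[nhds p] g) :
    Lbar ρ f =ᶠ[nhds p] Lbar ρ g := by
  filter_upwards [wdzb_congr h, wdwb_congr h] with q h1 h2
  simp only [Lbar, h1, h2]

lemma lbar_iter_congr {ρ f g : ℂ × ℂ → ℂ} {p : ℂ × ℂ} (h : f =ᶠ[nhds p] g) (j : ℕ) :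
    (Lbar ρ)^[j] f =ᶠ[nhds p] (Lbar ρ)^[j] g := by
  induction j generalizing f g with
  | zero => simpa using h
  | succ j ih =>
    rw [Function.iterate_succ_apply, Function.iterate_succ_apply]
    exact ih (lbar_congr h)

end Wirt

section SmSec
open Wirt Filter

variable {ρ : ℂ × ℂ → ℂ} {p : ℂ × ℂ}

/-- `f` is smooth near `p`. -/
def Sm (p : ℂ × ℂ) (f : ℂ × ℂ → ℂ) : Prop :=
  ∀ᶠ q in nhds p, ContDiffAt ℝ (⊤:ℕ∞) f q

lemma Sm.diff {f : ℂ × ℂ → ℂ} (hf : Sm p f) :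
    ∀ᶠ q in nhds p, DifferentiableAt ℝ f q :=
  hf.mono fun _ h => h.differentiableAt (by simp)

lemma Sm.lbar (hρ : Sm p ρ) {f : ℂ × ℂ → ℂ} (hf : Sm p f) : Sm p (Lbar ρ f) := by
  filter_upwards [hρ, hf] with q h1 h2 using cda_lbar h1 h2

lemma Sm.mul {f g : ℂ × ℂ → ℂ} (hf : Sm p f) (hg : Sm p g) :
    Sm p (fun x => f x * g x) := by
  filter_upwards [hf, hg] with q h1 h2 using h1.mul h2

lemma Sm.add {f g : ℂ × ℂ → ℂ} (hf : Sm p f) (hg : Sm p g) :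
    Sm p (fun x => f x + g x) := by
  filter_upwards [hf, hg] with q h1 h2 using h1.add h2

lemma Sm.const_mul {f : ℂ × ℂ → ℂ} (c : ℂ) (hf : Sm p f) :
    Sm p (fun x => c * f x) := by
  filter_upwards [hf] with q h1 using contDiffAt_const.mul h1

lemma Sm.pow {f : ℂ × ℂ → ℂ} (hf : Sm p f) (k : ℕ) :
    Sm p (fun x => f x ^ k) := by
  filter_upwards [hf] with q h1 using h1.pow k

lemma Sm.congr {f g : ℂ × ℂ → ℂ} (hf : Sm p f) (h : f =ᶠ[nhds p] g) : Sm p g := by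
  filter_upwards [hf, h.eventuallyEq_nhds] with q h1 h2
  exact h1.congr_of_eventuallyEq h2.symm

-- eventual derivation rules
lemma lbar_mul_ev {f g : ℂ × ℂ → ℂ} (hf : Sm p f) (hg : Sm p g) :
    Lbar ρ (fun x => f x * g x) =ᶠ[nhds p] fun x => f x * Lbar ρ g x + g x * Lbar ρ f x := by
  filter_upwards [hf.diff, hg.diff] with q h1 h2 using lbar_mul h1 h2

lemma lbar_add_ev {f g : ℂ × ℂ → ℂ} (hf : Sm p f) (hg : Sm p g) :
    Lbar ρ (fun x => f x + g x) =ᶠ[nhds p] fun x => Lbar ρ f x + Lbar ρ g x := by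
  filter_upwards [hf.diff, hg.diff] with q h1 h2 using lbar_add h1 h2

lemma lbar_const_mul_ev {f : ℂ × ℂ → ℂ} (c : ℂ) (hf : Sm p f) :
    Lbar ρ (fun x => c * f x) =ᶠ[nhds p] fun x => c * Lbar ρ f x := by
  filter_upwards [hf.diff] with q h1 using lbar_const_mul c h1

-- iterated rules at p
lemma lbar_iter_add (hρ : Sm p ρ) (j : ℕ) :
    ∀ f g : ℂ × ℂ → ℂ, Sm p f → Sm p g →
      (Lbar ρ)^[j] (fun x => f x + g x) p = (Lbar ρ)^[j] f p + (Lbar ρ)^[j] g p := by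
  induction j with
  | zero => intro f g _ _; simp
  | succ j ih =>
    intro f g hf hg
    rw [Function.iterate_succ_apply, Function.iterate_succ_apply,
      Function.iterate_succ_apply]
    rw [lbar_iter_congr (lbar_add_ev hf hg) j |>.self_of_nhds]
    exact ih _ _ (hρ.lbar hf) (hρ.lbar hg)

lemma lbar_iter_const_mul (hρ : Sm p ρ) (j : ℕ) :
    ∀ (c : ℂ) (f : ℂ × ℂ → ℂ), Sm p f →
      (Lbar ρ)^[j] (fun x => c * f x) p = c * (Lbar ρ)^[j] f p := by
  induction j with
  | zero => intro c f _; simp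
  | succ j ih =>
    intro c f hf
    rw [Function.iterate_succ_apply, Function.iterate_succ_apply]
    rw [lbar_iter_congr (lbar_const_mul_ev c hf) j |>.self_of_nhds]
    exact ih _ _ (hρ.lbar hf)

lemma Sm.sum (s : Finset ℕ) (e : ℕ → ℂ) (g : ℕ → ℂ × ℂ → ℂ)
    (hg : ∀ i ∈ s, Sm p (g i)) : Sm p (fun x => ∑ i ∈ s, e i * g i x) := by
  classical
  induction s using Finset.induction with
  | empty => filter_upwards with q using by simpa using contDiffAt_const
  | @insert b t hb ih =>
    simp only [Finset.sum_insert hb]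
    exact ((hg b (Finset.mem_insert_self b t)).const_mul (e b)).add
      (ih fun i hi => hg i (Finset.mem_insert_of_mem hi))

lemma lbar_iter_sum (hρ : Sm p ρ) (j : ℕ) (s : Finset ℕ) (e : ℕ → ℂ)
    (g : ℕ → ℂ × ℂ → ℂ) (hg : ∀ i ∈ s, Sm p (g i)) :
    (Lbar ρ)^[j] (fun x => ∑ i ∈ s, e i * g i x) p
      = ∑ i ∈ s, e i * (Lbar ρ)^[j] (g i) p := by
  classical
  induction s using Finset.induction with
  | empty =>
    simp only [Finset.sum_empty]
    have h0 : Sm p (fun _ : ℂ × ℂ => (0:ℂ)) := by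
      filter_upwards with q using contDiffAt_const
    have := lbar_iter_const_mul hρ j 0 (fun _ => (0:ℂ)) h0
    simpa using this
  | @insert b t hb ih =>
    have hSb : Sm p (g b) := hg b (Finset.mem_insert_self b t)
    have hSt : Sm p (fun x => ∑ i ∈ t, e i * g i x) :=
      Sm.sum t e g fun i hi => hg i (Finset.mem_insert_of_mem hi)
    simp only [Finset.sum_insert hb]
    rw [lbar_iter_add hρ j _ _ (hSb.const_mul (e b)) hSt,
      lbar_iter_const_mul hρ j (e b) _ hSb,
      ih fun i hi => hg i (Finset.mem_insert_of_mem hi)]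

end SmSec

section KeySec
open Wirt Filter

variable {ρ : ℂ × ℂ → ℂ} {p : ℂ × ℂ}

lemma lbar_pow_ev {h : ℂ × ℂ → ℂ} (hh : Sm p h) (m : ℕ) :
    Lbar ρ (fun x => h x ^ (m + 1)) =ᶠ[nhds p]
      fun x => (m + 1 : ℂ) * h x ^ m * Lbar ρ h x := by
  induction m with
  | zero =>
    have : (fun x => h x ^ (0 + 1)) = h := by funext x; simp
    rw [this]
    filter_upwards with x; simp
  | succ m ih =>
    have e1 : (fun x => h x ^ (m + 1 + 1)) = fun x => h x * h x ^ (m + 1) := by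
      funext x; ring
    rw [e1]
    filter_upwards [lbar_mul_ev (ρ := ρ) hh (hh.pow (m+1)), ih] with x h1 h2
    rw [h1, h2]; push_cast; ring

lemma lbar_psi_pow_ev {h ψ : ℂ × ℂ → ℂ} (hh : Sm p h) (hψ : Sm p ψ) (i : ℕ) :
    Lbar ρ (fun x => ψ x * h x ^ (i + 1)) =ᶠ[nhds p]
      fun x => ((i + 1 : ℂ) * (ψ x * Lbar ρ h x) + Lbar ρ ψ x * h x) * h x ^ i := by
  filter_upwards [lbar_mul_ev (ρ := ρ) hψ (hh.pow (i+1)), lbar_pow_ev (ρ := ρ) hh i]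
    with x h1 h2
  rw [h1, h2]; ring

lemma lemS (hρ : Sm p ρ) {h : ℂ × ℂ → ℂ} (hh : Sm p h) (hh0 : h p = 0) :
    ∀ j i : ℕ, ∀ ψ : ℂ × ℂ → ℂ, Sm p ψ → j < i →
      (Lbar ρ)^[j] (fun x => ψ x * h x ^ i) p = 0 := by
  intro j
  induction j with
  | zero =>
    intro i ψ _ hji
    simp only [Function.iterate_zero, id_eq, hh0, zero_pow (by omega : i ≠ 0), mul_zero]
  | succ j ih =>
    intro i ψ hψ hji
    obtain ⟨m, rfl⟩ : ∃ m, i = m + 1 := ⟨i - 1, by omega⟩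
    rw [Function.iterate_succ_apply]
    rw [(lbar_iter_congr (lbar_psi_pow_ev (ρ := ρ) hh hψ m) j).self_of_nhds]
    exact ih m _ ((((hψ.mul (hρ.lbar hh)).const_mul _).add ((hρ.lbar hψ).mul hh))) (by omega)

lemma lemT (hρ : Sm p ρ) {h : ℂ × ℂ → ℂ} (hh : Sm p h) (hh0 : h p = 0) :
    ∀ i : ℕ, ∀ ψ : ℂ × ℂ → ℂ, Sm p ψ →
      (Lbar ρ)^[i] (fun x => ψ x * h x ^ i) p
        = (i.factorial : ℂ) * ψ p * (Lbar ρ h p) ^ i := by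
  intro i
  induction i with
  | zero => intro ψ _; simp
  | succ i ih =>
    intro ψ hψ
    rw [Function.iterate_succ_apply]
    rw [(lbar_iter_congr (lbar_psi_pow_ev (ρ := ρ) hh hψ i) i).self_of_nhds]
    have efun : (fun x => ((i + 1 : ℂ) * (ψ x * Lbar ρ h x) + Lbar ρ ψ x * h x) * h x ^ i)
        = fun x => ((i + 1 : ℂ) * ((fun y => ψ y * Lbar ρ h y) x * h x ^ i))
          + ((fun y => Lbar ρ ψ y) x * h x ^ (i + 1)) := by
      funext x; ring
    rw [efun]
    have hS1 : Sm p (fun x => (i + 1 : ℂ) * ((fun y => ψ y * Lbar ρ h y) x * h x ^ i)) :=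
      ((hψ.mul (hρ.lbar hh)).mul (hh.pow i)).const_mul _
    have hS2 : Sm p (fun x => (fun y => Lbar ρ ψ y) x * h x ^ (i + 1)) :=
      (hρ.lbar hψ).mul (hh.pow (i+1))
    rw [lbar_iter_add hρ i _ _ hS1 hS2]
    have h2 : (Lbar ρ)^[i] (fun x => (fun y => Lbar ρ ψ y) x * h x ^ (i + 1)) p = 0 :=
      lemS hρ hh hh0 i (i+1) _ (hρ.lbar hψ) (by omega)
    rw [h2, add_zero]
    have h1 : (Lbar ρ)^[i]
        (fun x => (i + 1 : ℂ) * ((fun y => ψ y * Lbar ρ h y) x * h x ^ i)) p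
          = (i + 1 : ℂ) * ((Lbar ρ)^[i] (fun x => (ψ x * Lbar ρ h x) * h x ^ i) p) :=
      lbar_iter_const_mul hρ i _ _ ((hψ.mul (hρ.lbar hh)).mul (hh.pow i))
    rw [h1, ih _ (hψ.mul (hρ.lbar hh))]
    rw [Nat.factorial_succ]
    push_cast; ring

end KeySec

section DetSec
open Wirt Filter Finset

variable {ρ : ℂ × ℂ → ℂ} {p : ℂ × ℂ}

lemma detW (hρ : Sm p ρ) (n : ℕ) (u v : ℂ × ℂ → ℂ) (hu : Sm p u) (hv : Sm p v)
    (F : Fin (n+1) → ℂ × ℂ → ℂ)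
    (hF : ∀ k : Fin (n+1), F k =ᶠ[nhds p] fun x => u x * v x ^ (k:ℕ)) :
    (Matrix.of fun k j : Fin (n+1) => (Lbar ρ)^[(j:ℕ)] (F k) p).det
      = ∏ i : Fin (n+1), (((i:ℕ).factorial : ℂ) * u p * (Lbar ρ v p) ^ (i:ℕ)) := by
  classical
  set h : ℂ × ℂ → ℂ := fun x => v x - v p with hh_def
  have hh : Sm p h := by filter_upwards [hv] with q hq using hq.sub contDiffAt_const
  have hh0 : h p = 0 := sub_self _
  have hLh : Lbar ρ h = Lbar ρ v := by
    funext q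
    simp only [Lbar, wdzb, wdwb, hh_def, fderiv_sub_const]
  set g : ℕ → ℂ × ℂ → ℂ := fun i x => u x * h x ^ i with hg_def
  have hSg : ∀ i, Sm p (g i) := fun i => hu.mul (hh.pow i)
  set N : Matrix (Fin (n+1)) (Fin (n+1)) ℂ :=
    Matrix.of fun i j => (Lbar ρ)^[(j:ℕ)] (g (i:ℕ)) p with hN_def
  set B : Matrix (Fin (n+1)) (Fin (n+1)) ℂ :=
    Matrix.of fun k i => if (i:ℕ) ≤ (k:ℕ)
      then (((k:ℕ).choose (i:ℕ) : ℂ) * v p ^ ((k:ℕ) - (i:ℕ))) else 0 with hB_def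
  have hMBN : (Matrix.of fun k j : Fin (n+1) => (Lbar ρ)^[(j:ℕ)] (F k) p) = B * N := by
    ext k j
    rw [Matrix.mul_apply]
    simp only [Matrix.of_apply]
    have e1 : (Lbar ρ)^[(j:ℕ)] (F k) p
        = (Lbar ρ)^[(j:ℕ)] (fun x => u x * v x ^ (k:ℕ)) p :=
      (lbar_iter_congr (hF k) (j:ℕ)).self_of_nhds
    have e2 : (fun x => u x * v x ^ (k:ℕ))
        = fun x => ∑ i ∈ range ((k:ℕ)+1),
            (((k:ℕ).choose i : ℂ) * v p ^ ((k:ℕ) - i)) * g i x := by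
      funext x
      have hv' : v x = h x + v p := by simp [hh_def]
      rw [hv', add_pow, Finset.mul_sum]
      refine Finset.sum_congr rfl fun i hi => ?_
      simp only [hg_def]; ring
    rw [e1, e2, lbar_iter_sum hρ (j:ℕ) _ _ _ (fun i _ => hSg i)]
    have e3 : ∀ i : Fin (n+1), B k i * N i j
        = (if (i:ℕ) ≤ (k:ℕ) then (((k:ℕ).choose (i:ℕ) : ℂ) * v p ^ ((k:ℕ) - (i:ℕ))) else 0)
            * (Lbar ρ)^[(j:ℕ)] (g (i:ℕ)) p := fun i => rfl
    simp only [e3]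
    rw [Fin.sum_univ_eq_sum_range
      (fun i => (if i ≤ (k:ℕ) then (((k:ℕ).choose i : ℂ) * v p ^ ((k:ℕ) - i)) else 0)
        * (Lbar ρ)^[(j:ℕ)] (g i) p)]
    rw [← Finset.sum_subset (Finset.range_subset_range.mpr (by omega : (k:ℕ)+1 ≤ n+1))
      (fun i _ hi => by
        have : ¬ i ≤ (k:ℕ) := by simp [Finset.mem_range] at hi; omega
        rw [if_neg this, zero_mul])]
    refine Finset.sum_congr rfl fun i hi => ?_
    rw [if_pos (by simp [Finset.mem_range] at hi; omega)]
  rw [hMBN, Matrix.det_mul]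
  have hdetB : B.det = 1 := by
    rw [Matrix.det_of_lowerTriangular B (fun i j hij => by
      have hij' : (i:ℕ) < (j:ℕ) := by simpa using hij
      simp only [hB_def, Matrix.of_apply]
      rw [if_neg (by omega)])]
    refine Finset.prod_eq_one fun i _ => ?_
    simp [hB_def]
  have hdetN : N.det = ∏ i : Fin (n+1), (((i:ℕ).factorial : ℂ) * u p * (Lbar ρ v p) ^ (i:ℕ)) := by
    rw [Matrix.det_of_upperTriangular (fun i j hij => by
      simp only [hN_def, Matrix.of_apply]
      exact lemS hρ hh hh0 (j:ℕ) (i:ℕ) u hu (Fin.lt_iff_val_lt_val.mp hij))]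
    refine Finset.prod_congr rfl fun i _ => ?_
    simp only [hN_def, Matrix.of_apply]
    rw [lemT hρ hh hh0 (i:ℕ) u hu, hLh]
  rw [hdetB, hdetN, one_mul]

end DetSec

section MainSec
open Wirt Filter Finset

-- gradient nonvanishing from reality
lemma grad_ne_zero (ρ : ℂ × ℂ → ℂ) (p : ℂ × ℂ)
    (hdiff : DifferentiableAt ℝ ρ p)
    (hreal : ∀ᶠ q in nhds p, (ρ q).im = 0)
    (hdρ : fderiv ℝ ρ p ≠ 0) :
    ¬ (wdz ρ p = 0 ∧ wdw ρ p = 0) := by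
  rintro ⟨hz, hw⟩
  apply hdρ
  -- imaginary part of directional derivatives vanish
  have him : ∀ v : ℂ × ℂ, (fderiv ℝ ρ p v).im = 0 := by
    intro v
    have h1 : fderiv ℝ (fun q => (ρ q).im) p = 0 := by
      have h2 : (fun q => (ρ q).im) =ᶠ[nhds p] (fun _ => (0:ℝ)) := hreal
      rw [h2.fderiv_eq, fderiv_fun_const]; rfl
    have h3 : fderiv ℝ (fun q => (ρ q).im) p
        = Complex.imCLM.comp (fderiv ℝ ρ p) :=
      (Complex.imCLM.hasFDerivAt.comp p hdiff.hasFDerivAt).fderiv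
    have h4 : Complex.imCLM.comp (fderiv ℝ ρ p) = 0 := by rw [← h3, h1]
    have h5 := congrArg (fun L : (ℂ × ℂ) →L[ℝ] ℝ => L v) h4
    simpa using h5
  set L := fderiv ℝ ρ p with hL
  have key : ∀ a b : ℂ × ℂ, (L a - Complex.I * L b) / 2 = 0 → L a = 0 ∧ L b = 0 := by
    intro a b hab
    have h4 : L a = Complex.I * L b := by
      field_simp at hab; linear_combination hab
    have ha : (L a).im = 0 := him a
    have hb : (L b).im = 0 := him b
    constructor
    · apply Complex.ext
      · have := congrArg Complex.re h4
        simp [hb] at this; simpa using this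
      · exact ha
    · apply Complex.ext
      · have := congrArg Complex.im h4
        simp [ha] at this; simpa [this]
      · exact hb
  obtain ⟨h10, hI0⟩ := key _ _ hz
  obtain ⟨h01, h0I⟩ := key _ _ hw
  refine ContinuousLinearMap.ext fun v => ?_
  obtain ⟨z, w⟩ := v
  have hdecomp : (z, w) = z.re • ((1:ℂ), (0:ℂ)) + z.im • (Complex.I, (0:ℂ))
      + w.re • ((0:ℂ), (1:ℂ)) + w.im • ((0:ℂ), Complex.I) := by
    simp only [Prod.smul_mk, Prod.mk_add_mk, smul_zero, Prod.mk.injEq]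
    constructor
    · simp only [Complex.real_smul, add_zero]
      apply Complex.ext <;> simp
    · simp only [Complex.real_smul, zero_add]
      apply Complex.ext <;> simp
  rw [hdecomp, map_add, map_add, map_add, _root_.map_smul, _root_.map_smul,
    _root_.map_smul, _root_.map_smul, h10, hI0, h01, h0I]
  simp

end MainSec

section FinalSec
open Wirt Filter Finset


/-- **Proposition 3.1**: for a smooth real hypersurface `{ρ = 0}` and `n ≥ 3`,
`det Dₙ(ρ)(p) ≠ 0` if and only if Fefferman's Monge–Ampère operator `J(ρ)` is nonzero at `p`,
i.e. iff the hypersurface is Levi-nondegenerate at `p`. -/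
theorem detD_ne_zero_iff_levi_nondegenerate (n : ℕ) (hn : 3 ≤ n)
    (Ω : Set (ℂ × ℂ)) (hΩ : IsOpen Ω)
    (ρ : ℂ × ℂ → ℂ) (hρ : ContDiffOn ℝ (⊤ : ℕ∞) ρ Ω) (hρreal : ∀ q ∈ Ω, (ρ q).im = 0)
    (p : ℂ × ℂ) (hp : p ∈ Ω) (hp0 : ρ p = 0) (hdρ : fderiv ℝ ρ p ≠ 0) :
    (matD ρ n p).det ≠ 0 ↔ Jfeff ρ p ≠ 0 := by

  have hρS : Sm p ρ := by
    filter_upwards [hΩ.mem_nhds hp] with q hq using hρ.contDiffAt (hΩ.mem_nhds hq)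
  have hρc : ContDiffAt ℝ (⊤:ℕ∞) ρ p := hρS.self_of_nhds
  have hreal' : ∀ᶠ q in nhds p, (ρ q).im = 0 := by
    filter_upwards [hΩ.mem_nhds hp] with q hq using hρreal q hq
  have hgrad := grad_ne_zero ρ p (hρc.differentiableAt (by simp)) hreal' hdρ
  have hSz : Sm p (wdz ρ) := by filter_upwards [hρS] with q hq using Wirt.cda_wdz hq
  have hSw : Sm p (wdw ρ) := by filter_upwards [hρS] with q hq using Wirt.cda_wdw hq
  have hJ : Jfeff ρ p = wdw ρ p * Lbar ρ (wdz ρ) p - wdz ρ p * Lbar ρ (wdw ρ) p := by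
    simp only [Jfeff, Matrix.det_fin_three, hp0, Lbar]
    simp [Matrix.cons_val_zero, Matrix.cons_val_one]
    ring
  by_cases hw : wdw ρ p = 0
  · -- then wdz ρ p ≠ 0
    have hz : wdz ρ p ≠ 0 := fun h => hgrad ⟨h, hw⟩
    set u : ℂ × ℂ → ℂ := fun x => wdz ρ x ^ n with hu_def
    set v : ℂ × ℂ → ℂ := fun x => wdw ρ x / wdz ρ x with hv_def
    have hne_ev : ∀ᶠ q in nhds p, wdz ρ q ≠ 0 :=
      (Wirt.cda_wdz hρc).continuousAt.eventually_ne hz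
    have hSu : Sm p u := hSz.pow n
    have hSv : Sm p v := by
      filter_upwards [hρS, hne_ev] with q h1 h2
      have := (Wirt.cda_wdw h1).mul ((Wirt.cda_wdz h1).inv h2)
      simpa only [div_eq_mul_inv, Pi.inv_apply, hv_def] using this
    set G : Fin (n+1) → ℂ × ℂ → ℂ := fun k => fun q =>
      wdz ρ q ^ ((Fin.rev k : Fin (n+1)) : ℕ) * wdw ρ q ^ (n - ((Fin.rev k : Fin (n+1)) : ℕ))
      with hG_def
    set W : Matrix (Fin (n+1)) (Fin (n+1)) ℂ :=
      Matrix.of fun k j => (Lbar ρ)^[(j:ℕ)] (G k) p with hW_def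
    have hperm : matD ρ n p = W.submatrix Fin.revPerm id := by
      ext k j
      simp only [matD, hW_def, Matrix.submatrix_apply, Matrix.of_apply, hG_def,
        Fin.revPerm_apply, Fin.rev_rev, id_eq]
    have hF : ∀ k : Fin (n+1), G k =ᶠ[nhds p] fun x => u x * v x ^ (k:ℕ) := by
      intro k
      have hk : (k:ℕ) ≤ n := Nat.lt_succ_iff.mp k.isLt
      have hm : ((Fin.rev k : Fin (n+1)) : ℕ) = n - (k:ℕ) := by
        rw [Fin.val_rev]; omega
      filter_upwards [hne_ev] with q hq
      simp only [hG_def, hu_def, hv_def, hm, div_pow]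
      rw [show n - (n - (k:ℕ)) = (k:ℕ) by omega, pow_sub₀ _ hq hk]
      field_simp
    have hdetW : W.det
        = ∏ i : Fin (n+1), (((i:ℕ).factorial : ℂ) * u p * (Lbar ρ v p) ^ (i:ℕ)) :=
      detW hρS n u v hSu hSv G hF
    set c := Lbar ρ v p with hc_def
    have hvm : (fun x => v x * wdz ρ x) =ᶠ[nhds p] wdw ρ := by
      filter_upwards [hne_ev] with q hq
      simp only [hv_def]; exact div_mul_cancel₀ _ hq
    have hL1 : Lbar ρ (wdw ρ) p = v p * Lbar ρ (wdz ρ) p + wdz ρ p * c := by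
      have h1 := (Wirt.lbar_congr (ρ := ρ) hvm).self_of_nhds
      rw [← h1, Wirt.lbar_mul (hSv.diff.self_of_nhds) (hSz.diff.self_of_nhds)]
    have hvp : v p * wdz ρ p = wdw ρ p := div_mul_cancel₀ _ hz
    have hJc : Jfeff ρ p = -(wdz ρ p ^ 2) * c := by
      have hvp' : v p = wdw ρ p / wdz ρ p := rfl
      rw [hJ, hL1, hvp']
      field_simp
      ring
    have hsgn : ((Equiv.Perm.sign (Fin.revPerm : Equiv.Perm (Fin (n+1))) : ℤ) : ℂ) ≠ 0 :=
      Int.cast_ne_zero.mpr (Units.ne_zero _)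
    rw [hperm, Matrix.det_permute, hJc]
    constructor
    · intro hne
      have hprod : W.det ≠ 0 := fun h => hne (by rw [h, mul_zero])
      rw [hdetW, Finset.prod_ne_zero_iff] at hprod
      have h1 := hprod ⟨1, by omega⟩ (Finset.mem_univ _)
      have hc : c ≠ 0 := by
        intro h
        apply h1
        simp [h, hc_def]
      exact mul_ne_zero (neg_ne_zero.mpr (pow_ne_zero 2 hz)) hc
    · intro hne
      have hc : c ≠ 0 := by
        intro h; exact hne (by rw [h, mul_zero])
      apply mul_ne_zero hsgn
      rw [hdetW]
      rw [Finset.prod_ne_zero_iff]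
      intro i _
      exact mul_ne_zero (mul_ne_zero (Nat.cast_ne_zero.mpr (Nat.factorial_ne_zero _))
        (pow_ne_zero n hz)) (pow_ne_zero _ hc)
  · -- wdw ρ p ≠ 0
    set u : ℂ × ℂ → ℂ := fun x => wdw ρ x ^ n with hu_def
    set v : ℂ × ℂ → ℂ := fun x => wdz ρ x / wdw ρ x with hv_def
    have hne_ev : ∀ᶠ q in nhds p, wdw ρ q ≠ 0 :=
      (Wirt.cda_wdw hρc).continuousAt.eventually_ne hw
    have hSu : Sm p u := hSw.pow n
    have hSv : Sm p v := by
      filter_upwards [hρS, hne_ev] with q h1 h2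
      have := (Wirt.cda_wdz h1).mul ((Wirt.cda_wdw h1).inv h2)
      simpa only [div_eq_mul_inv, Pi.inv_apply, hv_def] using this
    have hF : ∀ k : Fin (n+1),
        (fun q => wdz ρ q ^ (k:ℕ) * wdw ρ q ^ (n - (k:ℕ))) =ᶠ[nhds p]
          fun x => u x * v x ^ (k:ℕ) := by
      intro k
      have hk : (k:ℕ) ≤ n := Nat.lt_succ_iff.mp k.isLt
      filter_upwards [hne_ev] with q hq
      simp only [hu_def, hv_def, div_pow]
      rw [pow_sub₀ _ hq hk]
      field_simp
    have hdet : (matD ρ n p).det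
        = ∏ i : Fin (n+1), (((i:ℕ).factorial : ℂ) * u p * (Lbar ρ v p) ^ (i:ℕ)) :=
      detW hρS n u v hSu hSv _ hF
    set c := Lbar ρ v p with hc_def
    have hvm : (fun x => v x * wdw ρ x) =ᶠ[nhds p] wdz ρ := by
      filter_upwards [hne_ev] with q hq
      simp only [hv_def]; exact div_mul_cancel₀ _ hq
    have hL1 : Lbar ρ (wdz ρ) p = v p * Lbar ρ (wdw ρ) p + wdw ρ p * c := by
      have h1 := (Wirt.lbar_congr (ρ := ρ) hvm).self_of_nhds
      rw [← h1, Wirt.lbar_mul (hSv.diff.self_of_nhds) (hSw.diff.self_of_nhds)]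
    have hvp : v p * wdw ρ p = wdz ρ p := div_mul_cancel₀ _ hw
    have hJc : Jfeff ρ p = wdw ρ p ^ 2 * c := by
      have hvp' : v p = wdz ρ p / wdw ρ p := rfl
      rw [hJ, hL1, hvp']
      field_simp
      ring
    rw [hdet, hJc]
    constructor
    · intro hne
      rw [Finset.prod_ne_zero_iff] at hne
      have h1 := hne ⟨1, by omega⟩ (Finset.mem_univ _)
      have hc : c ≠ 0 := by
        intro h
        apply h1
        simp [h, hc_def]
      exact mul_ne_zero (pow_ne_zero 2 hw) hc
    · intro hne
      have hc : c ≠ 0 := by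
        intro h; exact hne (by rw [h, mul_zero])
      rw [Finset.prod_ne_zero_iff]
      intro i _
      exact mul_ne_zero (mul_ne_zero (Nat.cast_ne_zero.mpr (Nat.factorial_ne_zero _))
        (pow_ne_zero n hw)) (pow_ne_zero _ hc)


end FinalSec
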